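/- If there exists an ℵ₁-Kurepa tree with exactly κ cofinal branches (κ ≥ ℵ₂), then the sentence ψ has a maximal model of cardinality κ, where maximal means it has no proper extension among models of ψ. -/

import Mathlib

open Cardinal

/-- A set-theoretic tree: a transitive well-founded relation in which the
predecessors of any element are linearly ordered. -/
structure STree : Type 1 where
  σ : Type
  lt : σ → σ → Prop
  lt_trans : ∀ a b c, lt a b → lt b c → lt a c
  wf : WellFounded lt
  pred_linear : ∀ c a b, lt a c → lt b c → a = b ∨ lt a b ∨ lt b a

/-- The level (rank) of a node of a tree. -/
noncomputable def STree.rank (T : STree) (x : T.σ) : Ordinal := (T.wf.apply x).rank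

/-- A cofinal branch of height `κ`: a downward-closed chain meeting every level below `κ.ord`. -/
def STree.IsCofBranch (T : STree) (κ : Cardinal) (B : Set T.σ) : Prop :=
  (∀ x ∈ B, ∀ y, T.lt y x → y ∈ B) ∧
  (∀ x ∈ B, ∀ y ∈ B, x = y ∨ T.lt x y ∨ T.lt y x) ∧
  (∀ o : Ordinal, o < κ.ord → ∃ x ∈ B, T.rank x = o)

/-- The number of cofinal branches of height `κ`. -/
noncomputable def STree.branchCard (T : STree) (κ : Cardinal) : Cardinal :=
  #{B : Set T.σ // T.IsCofBranch κ B}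

/-- A `κ`-Kurepa tree: height `κ`, levels of size `< κ`, and at least `κ⁺` cofinal branches. -/
def IsKurepaTree (κ : Cardinal) (T : STree) : Prop :=
  ℵ₀ ≤ κ ∧
  (∀ x : T.σ, T.rank x < κ.ord) ∧
  (∀ o : Ordinal, o < κ.ord → ∃ x : T.σ, T.rank x = o) ∧
  (∀ o : Ordinal, #{x : T.σ // T.rank x = o} < κ) ∧
  Order.succ κ ≤ T.branchCard κ

/-- A model of the sentence `ψ`: a tree whose levels are indexed by an ℵ₁-like linear
order `L` with a maximum element `⊤`; `V a` is the (countable, for `a ≠ ⊤`) set of nodes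
at level `a`, and `V ⊤` is the set of maximal branches. -/
structure PsiModel : Type 1 where
  L : Type
  [linL : LinearOrder L]
  [topL : OrderTop L]
  alephOneLike : ∀ a : L, a ≠ ⊤ → (Set.Iic a).Countable
  V : L → Type
  level_countable : ∀ a : L, a ≠ ⊤ → Countable (V a)
  level_nonempty : ∀ a : L, Nonempty (V a)
  tlt : (Σ a : L, V a) → (Σ a : L, V a) → Prop
  tlt_level : ∀ x y, tlt x y → x.1 < y.1
  tlt_trans : ∀ x y z, tlt x y → tlt y z → tlt x z
  tlt_total : ∀ x y z, tlt x z → tlt y z → x.1 < y.1 → tlt x y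
  tlt_below : ∀ (x : Σ a : L, V a) (b : L), b < x.1 → ∃ y : V b, tlt ⟨b, y⟩ x
  pruned : ∀ x : Σ a : L, V a, x.1 ≠ ⊤ → ∃ y : V ⊤, tlt x ⟨⊤, y⟩
  branch_unique : ∀ x y : V ⊤, (∀ z, tlt z ⟨⊤, x⟩ ↔ tlt z ⟨⊤, y⟩) → x = y

attribute [instance] PsiModel.linL PsiModel.topL

/-- The cardinality of a model of `ψ` (the universe is `P ∪ L ∪ V` with `P` countably
infinite). -/
noncomputable def PsiModel.card (M : PsiModel) : Cardinal :=
  ℵ₀ + #M.L + #(Σ a : M.L, M.V a)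

/-- A substructure embedding between models of `ψ`, incorporating the derived properties:
the level order of the smaller model is an initial segment of that of the larger one,
non-maximal levels agree, and the tree order is preserved. -/
structure PsiEmbed (M N : PsiModel) where
  fL : M.L → N.L
  fL_mono : StrictMono fL
  fL_init : ∀ (a : M.L) (c : N.L), c ≤ fL a → ∃ b : M.L, fL b = c
  fV : ∀ a : M.L, M.V a → N.V (fL a)
  fV_inj : ∀ a : M.L, Function.Injective (fV a)
  fV_surj : ∀ a : M.L, a ≠ ⊤ → Function.Surjective (fV a)
  tlt_iff : ∀ x y : (Σ a : M.L, M.V a),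
    M.tlt x y ↔ N.tlt ⟨fL x.1, fV x.1 x.2⟩ ⟨fL y.1, fV y.1 y.2⟩

/-- The induced map on nodes. -/
def PsiEmbed.map {M N : PsiModel} (e : PsiEmbed M N) (x : Σ a : M.L, M.V a) :
    Σ a : N.L, N.V a := ⟨e.fL x.1, e.fV x.1 x.2⟩

/-- A model of `ψ` is maximal if it has no proper extension: every embedding into another
model of `ψ` is onto. -/
def PsiModel.MaximalModel (M : PsiModel) : Prop :=
  ∀ (N : PsiModel) (e : PsiEmbed M N),
    Function.Surjective e.fL ∧ ∀ a : M.L, Function.Surjective (e.fV a)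

/-! ### Auxiliary development for `stmt14` -/

namespace KurepaAux

noncomputable section

/-- `ω₁` as an ordinal. -/
def Ω : Ordinal := (aleph 1).ord

/-- A type of order type `ω₁`. -/
abbrev τ : Type := Ω.ToType

def τiso : Set.Iio Ω ≃o τ := Ordinal.ToType.mk

/-- The ordinal corresponding to an element of `τ`. -/
def ordOf (a : τ) : Ordinal := (τiso.symm a).val

lemma ordOf_lt (a : τ) : ordOf a < Ω := (τiso.symm a).2

lemma ordOf_lt_iff {a b : τ} : ordOf a < ordOf b ↔ a < b := by
  simp [ordOf, Subtype.coe_lt_coe]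

lemma ordOf_inj : Function.Injective ordOf := fun a b h =>
  τiso.symm.injective (Subtype.ext h)

def elOf (o : Ordinal) (h : o < Ω) : τ := τiso ⟨o, h⟩

@[simp] lemma ordOf_elOf (o : Ordinal) (h : o < Ω) : ordOf (elOf o h) = o := by
  simp [ordOf, elOf]

lemma mk_tau : #τ = aleph 1 := by rw [Cardinal.mk_toType, Ω, card_ord]

lemma Iic_tau_countable (a : τ) : (Set.Iic a).Countable := by
  rw [← Set.Iio_insert]
  exact Set.Countable.insert _
    ((countable_iff_lt_aleph_one _).2 (Cardinal.mk_Iio_ord_toType a))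

instance : NoMaxOrder τ := Cardinal.noMaxOrder (aleph0_le_aleph 1)

/-! ### Tree lemmas -/

lemma rank_lt_of_lt (T : STree) {x y : T.σ} (h : T.lt x y) : T.rank x < T.rank y :=
  Acc.rank_lt_of_rel (T.wf.apply y) h

lemma exists_pred_rank (T : STree) (x : T.σ) :
    ∀ {o : Ordinal}, o < T.rank x → ∃ y, T.lt y x ∧ T.rank y = o := by
  induction x using T.wf.induction with
  | _ x IH =>
    intro o ho
    rw [STree.rank, Acc.rank_eq, Ordinal.lt_iSup_iff] at ho
    obtain ⟨⟨y, hy⟩, ho⟩ := ho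
    rw [Order.lt_succ_iff] at ho
    rcases ho.eq_or_lt with he | hl
    · exact ⟨y, hy, he.symm⟩
    · obtain ⟨z, hz, hz2⟩ := IH y hy hl
      exact ⟨z, T.lt_trans _ _ _ hz hy, hz2⟩

lemma chain_lt (T : STree) {u v : T.σ} (h : u = v ∨ T.lt u v ∨ T.lt v u)
    (hr : T.rank u < T.rank v) : T.lt u v := by
  rcases h with rfl | h | h
  · exact absurd hr (lt_irrefl _)
  · exact h
  · exact absurd (rank_lt_of_lt T h) (lt_asymm hr)

/-! ### The model -/

variable (T : STree)

/-- A node lying on some cofinal branch. -/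
def Pruned (t : T.σ) : Prop := ∃ B, T.IsCofBranch (aleph 1) B ∧ t ∈ B

/-- The pruned nodes of level `α`. -/
def Node (α : τ) : Type := {t : T.σ // Pruned T t ∧ T.rank t = ordOf α}

/-- The cofinal branches. -/
def Branch : Type := {B : Set T.σ // T.IsCofBranch (aleph 1) B}

/-- The levels of the model. -/
def V : WithTop τ → Type
  | ⊤ => Branch T
  | (α : τ) => Node T α

/-- The order of the model. -/
def tlt : (Σ a : WithTop τ, V T a) → (Σ a : WithTop τ, V T a) → Prop
  | ⟨(_ : τ), u⟩, ⟨(_ : τ), v⟩ => T.lt u.val v.val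
  | ⟨(_ : τ), u⟩, ⟨⊤, b⟩ => u.val ∈ b.val
  | ⟨⊤, _⟩, _ => False

lemma sigma_cases (x : Σ a : WithTop τ, V T a) :
    (∃ (α : τ) (u : Node T α), x = ⟨(α : WithTop τ), u⟩) ∨ ∃ B : Branch T, x = ⟨⊤, B⟩ := by
  obtain ⟨a, u⟩ := x
  induction a using WithTop.recTopCoe with
  | top => exact Or.inr ⟨u, rfl⟩
  | coe α => exact Or.inl ⟨α, u, rfl⟩

lemma node_rank_lt {T : STree} {α β : τ} (h : (α : WithTop τ) < (β : WithTop τ))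
    (u : Node T α) (v : Node T β) : T.rank u.val < T.rank v.val := by
  rw [u.2.2, v.2.2]; exact ordOf_lt_iff.mpr (WithTop.coe_lt_coe.mp h)

variable {T}

lemma branch_nonempty (hT : IsKurepaTree (aleph 1) T) : Nonempty (Branch T) := by
  rw [← Cardinal.mk_ne_zero_iff]
  have h1 : aleph 1 < T.branchCard (aleph 1) := lt_of_lt_of_le (Order.lt_succ _) hT.2.2.2.2
  have h0 : (0 : Cardinal) < T.branchCard (aleph 1) :=
    lt_of_le_of_lt zero_le h1
  exact ne_of_gt h0

variable (T)

/-- The model of `ψ` built from a Kurepa tree. -/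
def KModel (hT : IsKurepaTree (aleph 1) T) : PsiModel where
  L := WithTop τ
  alephOneLike := by
    intro a ha
    obtain ⟨α, rfl⟩ : ∃ α : τ, a = (α : WithTop τ) := ⟨a.untop ha, (WithTop.coe_untop a ha).symm⟩
    have he : Set.Iic ((α : WithTop τ)) = (fun β : τ => (β : WithTop τ)) '' Set.Iic α := by
      ext x
      constructor
      · intro hx
        have hxt : x ≠ ⊤ := ne_top_of_le_ne_top (WithTop.coe_ne_top) hx
        obtain ⟨β, rfl⟩ : ∃ β : τ, x = (β : WithTop τ) :=
          ⟨x.untop hxt, (WithTop.coe_untop x hxt).symm⟩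
        exact ⟨β, WithTop.coe_le_coe.mp hx, rfl⟩
      · rintro ⟨β, hβ, rfl⟩; exact WithTop.coe_le_coe.mpr hβ
    rw [he]
    exact (Iic_tau_countable α).image _
  V := V T
  level_countable := by
    intro a ha
    obtain ⟨α, rfl⟩ : ∃ α : τ, a = (α : WithTop τ) := ⟨a.untop ha, (WithTop.coe_untop a ha).symm⟩
    have h1 : #(Node T α) ≤ #{t : T.σ // T.rank t = ordOf α} :=
      Cardinal.mk_le_of_injective (f := fun u => ⟨u.val, u.2.2⟩)
        (fun u v h => Subtype.ext (Subtype.mk_eq_mk.mp h))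
    have h2 : #{t : T.σ // T.rank t = ordOf α} < aleph 1 := hT.2.2.2.1 (ordOf α)
    have h3 : #(Node T α) ≤ ℵ₀ := by
      have := lt_of_le_of_lt h1 h2
      rwa [← Cardinal.succ_aleph0, Order.lt_succ_iff] at this
    exact Cardinal.mk_le_aleph0_iff.mp h3
  level_nonempty := by
    intro a
    obtain ⟨B, hB⟩ := branch_nonempty hT
    induction a using WithTop.recTopCoe with
    | top => exact ⟨(⟨B, hB⟩ : Branch T)⟩
    | coe α =>
      obtain ⟨t, htB, hrank⟩ := hB.2.2 (ordOf α) (ordOf_lt α)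
      exact ⟨(⟨t, ⟨B, hB, htB⟩, hrank⟩ : Node T α)⟩
  tlt := tlt T
  tlt_level := by
    intro x y h
    rcases sigma_cases T x with ⟨α, u, rfl⟩ | ⟨B, rfl⟩
    · rcases sigma_cases T y with ⟨β, v, rfl⟩ | ⟨C, rfl⟩
      · have hlt : T.lt u.val v.val := h
        have hr : T.rank u.val < T.rank v.val := rank_lt_of_lt T hlt
        rw [u.2.2, v.2.2] at hr
        exact WithTop.coe_lt_coe.mpr (ordOf_lt_iff.mp hr)
      · exact WithTop.coe_lt_top α
    · exact absurd h (fun h => h)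
  tlt_trans := by
    intro x y z hxy hyz
    rcases sigma_cases T x with ⟨α, u, rfl⟩ | ⟨B, rfl⟩
    · rcases sigma_cases T y with ⟨β, v, rfl⟩ | ⟨C, rfl⟩
      · rcases sigma_cases T z with ⟨γ, w, rfl⟩ | ⟨D, rfl⟩
        · exact T.lt_trans _ _ _ hxy hyz
        · exact D.2.1 v.val hyz u.val hxy
      · exact hyz.elim
    · exact hxy.elim
  tlt_total := by
    intro x y z hxz hyz hxy
    rcases sigma_cases T x with ⟨α, u, rfl⟩ | ⟨B, rfl⟩
    · rcases sigma_cases T y with ⟨β, v, rfl⟩ | ⟨C, rfl⟩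
      · have hr : T.rank u.val < T.rank v.val := node_rank_lt hxy u v
        rcases sigma_cases T z with ⟨γ, w, rfl⟩ | ⟨D, rfl⟩
        · exact chain_lt T (T.pred_linear w.val u.val v.val hxz hyz) hr
        · exact chain_lt T (D.2.2.1 u.val hxz v.val hyz) hr
      · exact hyz.elim
    · exact hxz.elim
  tlt_below := by
    intro x b hb
    rcases sigma_cases T x with ⟨α, u, rfl⟩ | ⟨B, rfl⟩
    · have hbt : b ≠ ⊤ := ne_top_of_lt hb
      obtain ⟨β, rfl⟩ : ∃ β : τ, b = (β : WithTop τ) := ⟨b.untop hbt, (WithTop.coe_untop b hbt).symm⟩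
      have hβα : ordOf β < T.rank u.val := by
        rw [u.2.2]; exact ordOf_lt_iff.mpr (WithTop.coe_lt_coe.mp hb)
      obtain ⟨y, hy, hyr⟩ := exists_pred_rank T u.val hβα
      obtain ⟨Bu, hBu, huB⟩ := u.2.1
      exact ⟨(⟨y, ⟨Bu, hBu, hBu.1 u.val huB y hy⟩, hyr⟩ : Node T β), hy⟩
    · have hbt : b ≠ ⊤ := ne_top_of_lt hb
      obtain ⟨β, rfl⟩ : ∃ β : τ, b = (β : WithTop τ) := ⟨b.untop hbt, (WithTop.coe_untop b hbt).symm⟩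
      obtain ⟨y, hyB, hyr⟩ := B.2.2.2 (ordOf β) (ordOf_lt β)
      exact ⟨(⟨y, ⟨B.val, B.2, hyB⟩, hyr⟩ : Node T β), hyB⟩
  pruned := by
    intro x hx
    rcases sigma_cases T x with ⟨α, u, rfl⟩ | ⟨B, rfl⟩
    · obtain ⟨Bu, hBu, huB⟩ := u.2.1
      exact ⟨(⟨Bu, hBu⟩ : Branch T), huB⟩
    · exact absurd rfl hx
  branch_unique := by
    intro B C h
    have key : ∀ B C : Branch T, (∀ z, tlt T z ⟨⊤, B⟩ → tlt T z ⟨⊤, C⟩) → B.val ⊆ C.val := by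
      intro B C h t htB
      have hα : T.rank t < Ω := hT.2.1 t
      exact h ⟨((elOf (T.rank t) hα : τ) : WithTop τ),
        (⟨t, ⟨B.val, B.2, htB⟩, (ordOf_elOf _ _).symm ▸ rfl⟩ : Node T (elOf (T.rank t) hα))⟩ htB
    exact Subtype.ext (le_antisymm (key B C (fun z => (h z).mp)) (key C B (fun z => (h z).mpr)))

variable {T}

lemma card_KModel (hT : IsKurepaTree (aleph 1) T) {κ : Cardinal} (hκ : aleph 2 ≤ κ)
    (hb : T.branchCard (aleph 1) = κ) : (KModel T hT).card = κ := by
  have hκ0 : ℵ₀ ≤ κ := (aleph0_le_aleph 2).trans hκ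
  have hκ1 : aleph 1 ≤ κ := (aleph_le_aleph.mpr one_le_two).trans hκ
  have hBr : #(Branch T) = κ := hb
  have hL : #(WithTop τ) ≤ aleph 1 := by
    have h1 : #(WithTop τ) = #τ + 1 := mk_option
    rw [h1, mk_tau]
    calc aleph 1 + 1 ≤ aleph 1 + aleph 1 := by
          exact add_le_add_right (le_trans one_le_aleph0 (aleph0_le_aleph 1)) _
      _ = aleph 1 := add_eq_self (aleph0_le_aleph 1)
  have hSigle : #(Σ a : WithTop τ, V T a) ≤ κ := by
    rw [mk_sigma]
    calc (Cardinal.sum fun a => #(V T a)) ≤ Cardinal.sum (fun _ : WithTop τ => κ) := by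
          apply Cardinal.sum_le_sum
          intro a
          induction a using WithTop.recTopCoe with
          | top => exact le_of_eq hBr
          | coe α =>
            have : Countable (V T (α : WithTop τ)) := (KModel T hT).level_countable _ WithTop.coe_ne_top
            exact (Cardinal.mk_le_aleph0_iff.mpr this).trans hκ0
      _ = #(WithTop τ) * κ := sum_const' _ _
      _ ≤ aleph 1 * κ := mul_le_mul_left hL κ
      _ = κ := mul_eq_right hκ0 hκ1 (aleph_pos 1).ne'
  have hSigge : κ ≤ #(Σ a : WithTop τ, V T a) := by
    rw [← hBr]
    exact Cardinal.mk_le_of_injective (f := fun B : Branch T => (⟨⊤, B⟩ : Σ a : WithTop τ, V T a))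
      (fun B C h => eq_of_heq (Sigma.mk.inj h).2)
  have hSig : #(Σ a : WithTop τ, V T a) = κ := le_antisymm hSigle hSigge
  have hsmall : ℵ₀ + #(WithTop τ) ≤ κ := by
    calc ℵ₀ + #(WithTop τ) ≤ aleph 1 + aleph 1 :=
          add_le_add (aleph0_le_aleph 1) hL
      _ = aleph 1 := add_eq_self (aleph0_le_aleph 1)
      _ ≤ κ := hκ1
  show ℵ₀ + #(WithTop τ) + #(Σ a : WithTop τ, V T a) = κ
  rw [hSig]
  exact add_eq_right hκ0 hsmall

lemma branch_unique' (N : PsiModel) {c : N.L} (hc : c = ⊤) (w₁ w₂ : N.V c)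
    (h : ∀ z, N.tlt z ⟨c, w₁⟩ ↔ N.tlt z ⟨c, w₂⟩) : w₁ = w₂ := by
  subst hc; exact N.branch_unique _ _ h

lemma maximal_KModel (hT : IsKurepaTree (aleph 1) T) : (KModel T hT).MaximalModel := by
  intro N e
  -- the top level maps to the top level
  have htop : e.fL ⊤ = ⊤ := by
    by_contra hne
    have hc : (Set.Iic (e.fL ⊤)).Countable := N.alephOneLike _ hne
    have hcs : Countable (Set.Iic (e.fL ⊤)) := hc.to_subtype
    have hinj : Function.Injective
        (fun a : (KModel T hT).L => (⟨e.fL a, e.fL_mono.monotone le_top⟩ : Set.Iic (e.fL ⊤))) :=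
      fun a b hab => e.fL_mono.injective (Subtype.mk_eq_mk.mp hab)
    have h1 : Countable (WithTop τ) := Function.Injective.countable hinj
    haveI := h1
    have h2 : Countable τ :=
      Function.Injective.countable (f := fun x : τ => ((x : WithTop τ) : (KModel T hT).L))
        (fun a b hab => WithTop.coe_injective hab)
    have h3 := Cardinal.mk_le_aleph0_iff.mpr h2
    rw [mk_tau] at h3
    exact absurd h3 (not_le.mpr aleph0_lt_aleph_one)
  have hLsurj : Function.Surjective e.fL := fun c => e.fL_init ⊤ c (htop ▸ le_top)
  refine ⟨hLsurj, ?_⟩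
  intro a
  rcases eq_or_ne a ⊤ with rfl | ha
  swap
  · exact e.fV_surj a ha
  intro w
  -- decompose any node of `N` strictly below the top into the image of a node of `M`
  have decomp : ∀ z' : Σ c : N.L, N.V c, z'.1 < e.fL ⊤ →
      ∃ (α : τ) (u : Node T α), z' = e.map ⟨(α : WithTop τ), u⟩ := by
    rintro ⟨c, v⟩ hc
    obtain ⟨b, rfl⟩ := e.fL_init ⊤ c hc.le
    have hbt : b ≠ ⊤ := by rintro rfl; exact lt_irrefl _ hc
    obtain ⟨u, rfl⟩ := e.fV_surj b hbt v
    obtain ⟨α, rfl⟩ : ∃ α : τ, b = (α : WithTop τ) := ⟨b.untop hbt, (WithTop.coe_untop b hbt).symm⟩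
    exact ⟨α, u, rfl⟩
  -- at most one node per level lies below `w`
  have thin : ∀ (α : τ) (u v : Node T α),
      N.tlt (e.map ⟨(α : WithTop τ), u⟩) ⟨e.fL ⊤, w⟩ →
      N.tlt (e.map ⟨(α : WithTop τ), v⟩) ⟨e.fL ⊤, w⟩ → u = v := by
    intro α u v hu hv
    obtain ⟨β, hβ⟩ := exists_gt α
    have hlt : e.fL (β : WithTop τ) < e.fL ⊤ := e.fL_mono (WithTop.coe_lt_top β)
    obtain ⟨y, hy⟩ := N.tlt_below ⟨e.fL ⊤, w⟩ (e.fL (β : WithTop τ)) hlt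
    obtain ⟨x, rfl⟩ := e.fV_surj (β : WithTop τ) WithTop.coe_ne_top y
    have hαβ : e.fL (α : WithTop τ) < e.fL (β : WithTop τ) :=
      e.fL_mono (WithTop.coe_lt_coe.mpr hβ)
    have h1 : N.tlt (e.map ⟨(α : WithTop τ), u⟩) (e.map ⟨(β : WithTop τ), x⟩) :=
      N.tlt_total _ _ _ hu hy hαβ
    have h2 : N.tlt (e.map ⟨(α : WithTop τ), v⟩) (e.map ⟨(β : WithTop τ), x⟩) :=
      N.tlt_total _ _ _ hv hy hαβ
    have l1 : T.lt u.val x.val := (e.tlt_iff ⟨(α : WithTop τ), u⟩ ⟨(β : WithTop τ), x⟩).mpr h1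
    have l2 : T.lt v.val x.val := (e.tlt_iff ⟨(α : WithTop τ), v⟩ ⟨(β : WithTop τ), x⟩).mpr h2
    have hr : T.rank u.val = T.rank v.val := by rw [u.2.2, v.2.2]
    rcases T.pred_linear x.val u.val v.val l1 l2 with h | h | h
    · exact Subtype.ext h
    · exact absurd (hr ▸ rank_lt_of_lt T h) (lt_irrefl _)
    · exact absurd (hr ▸ rank_lt_of_lt T h) (lt_irrefl _)
  -- the set of tree nodes below `w`
  set S : Set T.σ := {t | ∃ (α : τ) (u : Node T α),
    u.val = t ∧ N.tlt (e.map ⟨(α : WithTop τ), u⟩) ⟨e.fL ⊤, w⟩} with hSdef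
  have hSbr : T.IsCofBranch (aleph 1) S := by
    refine ⟨?_, ?_, ?_⟩
    · rintro t ⟨α, u, rfl, hu⟩ s hs
      obtain ⟨Bu, hBu, htB⟩ := u.2.1
      have hsp : Pruned T s := ⟨Bu, hBu, hBu.1 _ htB s hs⟩
      have hrs : T.rank s < Ω := hT.2.1 s
      refine ⟨elOf (T.rank s) hrs, ⟨s, hsp, (ordOf_elOf _ _).symm⟩, rfl, ?_⟩
      have hMlt : (KModel T hT).tlt ⟨((elOf (T.rank s) hrs : τ) : WithTop τ),
          (⟨s, hsp, (ordOf_elOf _ _).symm⟩ : Node T (elOf (T.rank s) hrs))⟩ ⟨(α : WithTop τ), u⟩ := hs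
      exact N.tlt_trans _ _ _ ((e.tlt_iff _ _).mp hMlt) hu
    · rintro t ⟨α, u, rfl, hu⟩ t' ⟨β, v, rfl, hv⟩
      by_cases hαβ : α = β
      · subst hαβ
        exact Or.inl (congrArg Subtype.val (thin α u v hu hv))
      · have hne : ordOf α ≠ ordOf β := fun h => hαβ (ordOf_inj h)
        rcases hne.lt_or_gt with h | h
        · refine Or.inr (Or.inl ?_)
          have hlt := N.tlt_total _ _ _ hu hv
            (e.fL_mono (WithTop.coe_lt_coe.mpr (ordOf_lt_iff.mp h)))
          exact (e.tlt_iff ⟨(α : WithTop τ), u⟩ ⟨(β : WithTop τ), v⟩).mpr hlt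
        · refine Or.inr (Or.inr ?_)
          have hlt := N.tlt_total _ _ _ hv hu
            (e.fL_mono (WithTop.coe_lt_coe.mpr (ordOf_lt_iff.mp h)))
          exact (e.tlt_iff ⟨(β : WithTop τ), v⟩ ⟨(α : WithTop τ), u⟩).mpr hlt
    · intro o ho
      have hoΩ : o < Ω := ho
      have hlt : e.fL ((elOf o hoΩ : τ) : WithTop τ) < e.fL ⊤ :=
        e.fL_mono (WithTop.coe_lt_top _)
      obtain ⟨y, hy⟩ := N.tlt_below ⟨e.fL ⊤, w⟩ _ hlt
      obtain ⟨u, rfl⟩ := e.fV_surj _ WithTop.coe_ne_top y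
      exact ⟨u.val, ⟨elOf o hoΩ, u, rfl, hy⟩, u.2.2.trans (ordOf_elOf o hoΩ)⟩
  -- the corresponding branch of the model
  refine ⟨(⟨S, hSbr⟩ : Branch T), branch_unique' N htop _ w ?_⟩
  intro z'
  constructor
  · intro hz
    have hlev : z'.1 < e.fL ⊤ := N.tlt_level _ _ hz
    obtain ⟨α, u, rfl⟩ := decomp z' hlev
    have hM : (KModel T hT).tlt ⟨(α : WithTop τ), u⟩
        ⟨(⊤ : WithTop τ), (⟨S, hSbr⟩ : Branch T)⟩ := (e.tlt_iff _ _).mpr hz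
    have hM' : ∃ (β : τ) (v : Node T β),
        v.val = u.val ∧ N.tlt (e.map ⟨(β : WithTop τ), v⟩) ⟨e.fL ⊤, w⟩ := hM
    obtain ⟨β, v, hveq, hv⟩ := hM'
    have hβα : β = α := ordOf_inj (by rw [← v.2.2, ← u.2.2, hveq])
    subst hβα
    have hvu : v = u := Subtype.ext hveq
    subst hvu
    exact hv
  · intro hz
    have hlev : z'.1 < e.fL ⊤ := N.tlt_level _ _ hz
    obtain ⟨α, u, rfl⟩ := decomp z' hlev
    have hM : (KModel T hT).tlt ⟨(α : WithTop τ), u⟩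
        ⟨(⊤ : WithTop τ), (⟨S, hSbr⟩ : Branch T)⟩ := ⟨α, u, rfl, hz⟩
    exact (e.tlt_iff _ _).mp hM

end

end KurepaAux

/-- If there is an `ℵ₁`-Kurepa tree with exactly `κ ≥ ℵ₂` cofinal branches, then `ψ` has a
maximal model of cardinality `κ`. -/
theorem stmt14 (κ : Cardinal) (hκ : aleph 2 ≤ κ)
    (T : STree) (hT : IsKurepaTree (aleph 1) T)
    (hb : T.branchCard (aleph 1) = κ) :
    ∃ M : PsiModel, M.card = κ ∧ M.MaximalModel := by
  exact ⟨KurepaAux.KModel T hT, KurepaAux.card_KModel hT hκ hb, KurepaAux.maximal_KModel hT⟩
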